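/- The intersection of all Fibonacci semigroups satisfies ⋂_{n≥1} Γ^Fib_n = ℤ² ∩ {(x,y) ∈ ℝ² : 0 ≤ y ≤ φ²·x}, where φ = (1+√5)/2 is the golden ratio. -/

import Mathlib

open Matrix BigOperators

noncomputable section

/-- The ambient space `ℝ^n`. -/
abbrev V (n : ℕ) := Fin n → ℝ

/-- The difference set `Λ_Γ = {x - y : x, y ∈ Γ}` of a set `Γ ⊆ ℝ^n`. -/
def diffSet {n : ℕ} (Γ : Set (V n)) : Set (V n) := {z | ∃ x ∈ Γ, ∃ y ∈ Γ, z = x - y}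

/-- A set is discrete if each of its points is isolated in it. -/
def IsDiscreteSet {n : ℕ} (Λ : Set (V n)) : Prop :=
  ∀ x ∈ Λ, ∃ ε : ℝ, 0 < ε ∧ ∀ y ∈ Λ, dist y x < ε → y = x

/-- An affine semigroup: a finitely generated additive submonoid of `ℝ^n` whose
difference group is discrete (a lattice). -/
def IsAffineSemigroup {n : ℕ} (Γ : Set (V n)) : Prop :=
  (∃ S : Finset (V n), (AddSubmonoid.closure (S : Set (V n)) : Set (V n)) = Γ) ∧
    IsDiscreteSet (diffSet Γ)

/-- A set is positive if `0` is its only element whose negative also belongs to it. -/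
def IsPositive {n : ℕ} (Γ : Set (V n)) : Prop := ∀ x ∈ Γ, -x ∈ Γ → x = 0

/-- The convex cone `K_Γ` of all nonnegative real combinations of elements of `Γ`. -/
def coneOf {n : ℕ} (Γ : Set (V n)) : Set (V n) :=
  {y | ∃ (k : ℕ) (c : Fin k → ℝ) (v : Fin k → V n),
    (∀ i, 0 ≤ c i) ∧ (∀ i, v i ∈ Γ) ∧ y = ∑ i, c i • v i}

/-- The dual cone `K* = {y : ⟨x,y⟩ ≥ 0 for all x ∈ K}`. -/
def dualCone {n : ℕ} (K : Set (V n)) : Set (V n) := {y | ∀ x ∈ K, 0 ≤ x ⬝ᵥ y}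

/-- The dual lattice `Λ* = {w ∈ span(Λ) : ⟨w,v⟩ ∈ ℤ for all v ∈ Λ}`. -/
def dualLattice {n : ℕ} (Λ : Set (V n)) : Set (V n) :=
  {w | w ∈ Submodule.span ℝ Λ ∧ ∀ v ∈ Λ, ∃ m : ℤ, w ⬝ᵥ v = (m : ℝ)}

/-- The dual affine semigroup `Γ* = (Λ_Γ)* ∩ (K_Γ)*`. -/
def dualSemigroup {n : ℕ} (Γ : Set (V n)) : Set (V n) :=
  dualLattice (diffSet Γ) ∩ dualCone (coneOf Γ)

/-- `A` generates the additive monoid `Γ`. -/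
def IsGenSet {n : ℕ} (A Γ : Set (V n)) : Prop := (AddSubmonoid.closure A : Set (V n)) = Γ

/-- `A` is a minimal generating set of the additive monoid `Γ`: it generates, and no
proper subset of it generates. -/
def IsMinGenSet {n : ℕ} (A Γ : Set (V n)) : Prop :=
  IsGenSet A Γ ∧ ∀ B ⊂ A, ¬ IsGenSet B Γ

/-- `S` is the slack matrix of the positive affine semigroup `Γ`: its `(i,j)` entry is
`⟨a i, b j⟩` where `a`, `b` enumerate the minimal generating sets of `Γ` and `Γ*`. -/
def IsSlackMatrix {n k l : ℕ} (Γ : Set (V n)) (S : Matrix (Fin k) (Fin l) ℤ) : Prop :=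
  ∃ (a : Fin k → V n) (b : Fin l → V n),
    Function.Injective a ∧ Function.Injective b ∧
    IsMinGenSet (Set.range a) Γ ∧ IsMinGenSet (Set.range b) (dualSemigroup Γ) ∧
    ∀ i j, (S i j : ℝ) = a i ⬝ᵥ b j

/-- The `i`-th row of an integer matrix, viewed as a real vector. -/
def rowVec {k l : ℕ} (S : Matrix (Fin k) (Fin l) ℤ) (i : Fin k) : V l := fun j => (S i j : ℝ)

/-- The `j`-th column of an integer matrix, viewed as a real vector. -/
def colVec {k l : ℕ} (S : Matrix (Fin k) (Fin l) ℤ) (j : Fin l) : V k := fun i => (S i j : ℝ)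

/-- `Γ_S^row`: all nonnegative integer combinations of the rows of `S`. -/
def GammaRow {k l : ℕ} (S : Matrix (Fin k) (Fin l) ℤ) : Set (V l) :=
  {x | ∃ c : Fin k → ℕ, x = ∑ i, (c i : ℝ) • rowVec S i}

/-- `Γ_S^col`: all nonnegative integer combinations of the columns of `S`. -/
def GammaCol {k l : ℕ} (S : Matrix (Fin k) (Fin l) ℤ) : Set (V k) :=
  {x | ∃ c : Fin l → ℕ, x = ∑ j, (c j : ℝ) • colVec S j}

/-- `Λ_S^row`: all integer combinations of the rows of `S`. -/
def LambdaRow {k l : ℕ} (S : Matrix (Fin k) (Fin l) ℤ) : Set (V l) :=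
  {x | ∃ c : Fin k → ℤ, x = ∑ i, (c i : ℝ) • rowVec S i}

/-- `Λ_S^col`: all integer combinations of the columns of `S`. -/
def LambdaCol {k l : ℕ} (S : Matrix (Fin k) (Fin l) ℤ) : Set (V k) :=
  {x | ∃ c : Fin l → ℤ, x = ∑ j, (c j : ℝ) • colVec S j}

/-- `K_S^row`: all nonnegative real combinations of the rows of `S`. -/
def KRow {k l : ℕ} (S : Matrix (Fin k) (Fin l) ℤ) : Set (V l) :=
  {x | ∃ c : Fin k → ℝ, (∀ i, 0 ≤ c i) ∧ x = ∑ i, c i • rowVec S i}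

/-- `K_S^col`: all nonnegative real combinations of the columns of `S`. -/
def KCol {k l : ℕ} (S : Matrix (Fin k) (Fin l) ℤ) : Set (V k) :=
  {x | ∃ c : Fin l → ℝ, (∀ j, 0 ≤ c j) ∧ x = ∑ j, c j • colVec S j}

/-- `Row(S)`: the row space of `S` over `ℝ`. -/
def RowSpace {k l : ℕ} (S : Matrix (Fin k) (Fin l) ℤ) : Set (V l) :=
  (Submodule.span ℝ (Set.range (rowVec S)) : Set (V l))

/-- `Col(S)`: the column space of `S` over `ℝ`. -/
def ColSpace {k l : ℕ} (S : Matrix (Fin k) (Fin l) ℤ) : Set (V k) :=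
  (Submodule.span ℝ (Set.range (colVec S)) : Set (V k))

/-- `ℤ^l` viewed inside `ℝ^l`. -/
def intPts (l : ℕ) : Set (V l) := {x | ∀ j, ∃ m : ℤ, x j = (m : ℝ)}

/-- `ℤ₊^l` viewed inside `ℝ^l`. -/
def nnIntPts (l : ℕ) : Set (V l) := {x | ∀ j, ∃ m : ℕ, x j = (m : ℝ)}

/-- `ℝ₊^l`: the nonnegative orthant. -/
def nnPts (l : ℕ) : Set (V l) := {x | ∀ j, 0 ≤ x j}

/-- `ι` (a linear map restricting to an additive semigroup homomorphism `Γ → Γ'`) is a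
lift of the positive affine semigroup `Γ`: `Γ'` is a positive affine semigroup and the
adjoint `ι*` (characterized on `Γ` by `⟨x, ι*(y)⟩ = ⟨ι(x), y⟩`) satisfies
`ι*(Γ'*) = Γ*`. -/
structure IsLift {n N : ℕ} (Γ : Set (V n)) (Γ' : Set (V N)) (ι : (V n) →ₗ[ℝ] (V N)) : Prop where
  lift_semigroup : IsAffineSemigroup Γ'
  lift_positive : IsPositive Γ'
  maps_to : ∀ x ∈ Γ, ι x ∈ Γ'
  adjoint_mem : ∀ y ∈ dualSemigroup Γ', ∃ z ∈ dualSemigroup Γ, ∀ x ∈ Γ, x ⬝ᵥ z = (ι x) ⬝ᵥ y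
  adjoint_surj : ∀ z ∈ dualSemigroup Γ, ∃ y ∈ dualSemigroup Γ', ∀ x ∈ Γ, x ⬝ᵥ z = (ι x) ⬝ᵥ y

/-- The nonnegative integer rank: the least inner dimension of a factorization
`A = B * C` with `B`, `C` nonnegative integer matrices. -/
def nnIntRank {m l : Type*} [Fintype m] [Fintype l] (A : Matrix m l ℤ) : ℕ :=
  sInf {r : ℕ | ∃ (B : Matrix m (Fin r) ℤ) (C : Matrix (Fin r) l ℤ),
    (∀ i j, 0 ≤ B i j) ∧ (∀ i j, 0 ≤ C i j) ∧ A = B * C}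

/-- The nonnegative rank: the least inner dimension of a factorization
`A = B * C` with `B`, `C` nonnegative real matrices. -/
def nnRank {m l : Type*} [Fintype m] [Fintype l] (A : Matrix m l ℤ) : ℕ :=
  sInf {r : ℕ | ∃ (B : Matrix m (Fin r) ℝ) (C : Matrix (Fin r) l ℝ),
    (∀ i j, 0 ≤ B i j) ∧ (∀ i j, 0 ≤ C i j) ∧ A.map (fun z => (z : ℝ)) = B * C}

/-- The Fibonacci semigroup `Γ^Fib_n = ℤ² ∩ {(x,y) : 0 ≤ F_{2n}·y ≤ F_{2n+2}·x}`
(with `Nat.fib`, so `F 1 = F 2 = 1`). -/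
def GammaFib (n : ℕ) : Set (V 2) :=
  {p | (∃ a : ℤ, p 0 = (a : ℝ)) ∧ (∃ b : ℤ, p 1 = (b : ℝ)) ∧
    0 ≤ (Nat.fib (2 * n) : ℝ) * p 1 ∧
    (Nat.fib (2 * n) : ℝ) * p 1 ≤ (Nat.fib (2 * n + 2) : ℝ) * p 0}

/-- Fibonacci numbers extended to negative indices by `F_{-m} = (-1)^{m+1} F_m`. -/
def fibZ (m : ℤ) : ℤ :=
  if 0 ≤ m then (Nat.fib m.toNat : ℤ)
  else (-1) ^ ((-m).toNat + 1) * (Nat.fib (-m).toNat : ℤ)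

/-- The `(n+1) × (n+1)` Toeplitz matrix with `(i,j)` entry `F_{2(i-j)+1}`. -/
def Mfib (n : ℕ) : Matrix (Fin (n + 1)) (Fin (n + 1)) ℤ :=
  fun i j => fibZ (2 * ((i : ℤ) - (j : ℤ)) + 1)

/-- `‖A‖₁`: the sum of all entries of a matrix. -/
def entrySum {m l : Type*} [Fintype m] [Fintype l] (A : Matrix m l ℤ) : ℤ := ∑ i, ∑ j, A i j

open goldenRatio in
lemma fib_key_aux (n : ℕ) :
    (Nat.fib (2*n+2) : ℝ) = ((1 + Real.sqrt 5)/2)^2 * (Nat.fib (2*n) : ℝ)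
      + (((1 - Real.sqrt 5)/2)^2)^n := by
  have hs : Real.sqrt 5 ≠ 0 := by positivity
  have key : Real.goldenRatio^2 - Real.goldenConj^2 = Real.sqrt 5 := by
    rw [sq_sub_sq, Real.goldenRatio_add_goldenConj, one_mul, Real.goldenRatio_sub_goldenConj]
  have h3 : (((1 - Real.sqrt 5)/2)^2)^n = Real.goldenConj^(2*n) := by
    rw [← pow_mul]
  rw [Real.coe_fib_eq, Real.coe_fib_eq, h3]
  have main : Real.goldenRatio^(2*n+2) - Real.goldenConj^(2*n+2) =
      Real.goldenRatio^2 * (Real.goldenRatio^(2*n) - Real.goldenConj^(2*n)) + Real.goldenConj^(2*n) * Real.sqrt 5 := by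
    linear_combination Real.goldenConj^(2*n) * key
  rw [main]
  show _ = ((1 + Real.sqrt 5)/2)^2 * _ + _
  field_simp

/-- The intersection of all Fibonacci semigroups is
`ℤ² ∩ {(x,y) : 0 ≤ y ≤ φ² x}`, with `φ = (1+√5)/2` the golden ratio. -/
theorem iInter_gammaFib :
    (⋂ n ∈ {n : ℕ | 1 ≤ n}, GammaFib n) =
      {p : V 2 | (∃ a : ℤ, p 0 = (a : ℝ)) ∧ (∃ b : ℤ, p 1 = (b : ℝ)) ∧
        0 ≤ p 1 ∧ p 1 ≤ ((1 + Real.sqrt 5) / 2) ^ 2 * p 0} := by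
  have hs5 : (0:ℝ) ≤ Real.sqrt 5 := Real.sqrt_nonneg 5
  have h5 : Real.sqrt 5 ^ 2 = 5 := Real.sq_sqrt (by norm_num)
  have hs1 : (1:ℝ) ≤ Real.sqrt 5 := by nlinarith
  set Φ : ℝ := ((1 + Real.sqrt 5)/2)^2 with hΦ
  set Ψ : ℝ := ((1 - Real.sqrt 5)/2)^2 with hΨ
  have hΦpos : 0 < Φ := by
    have : (0:ℝ) < (1 + Real.sqrt 5)/2 := by positivity
    exact pow_pos this 2
  have hΨ0 : (0:ℝ) ≤ Ψ := sq_nonneg _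
  have hΨ1 : Ψ ≤ 1 := by rw [hΨ]; nlinarith
  have key : ∀ n : ℕ, (Nat.fib (2*n+2) : ℝ) = Φ * (Nat.fib (2*n) : ℝ) + Ψ^n := fib_key_aux
  ext p
  simp only [Set.mem_iInter, Set.mem_setOf_eq, GammaFib]
  constructor
  · intro h
    obtain ⟨ha, hb, h1, _⟩ := h 1 le_rfl
    have hfib2 : (Nat.fib (2*1) : ℝ) = 1 := by norm_num
    refine ⟨ha, hb, by rw [hfib2, one_mul] at h1; exact h1, ?_⟩
    by_contra hlt
    push_neg at hlt
    set δ := p 1 - Φ * p 0 with hδ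
    have hδpos : 0 < δ := by simp only [hδ]; linarith
    obtain ⟨N, hN⟩ := exists_nat_gt (|p 0| / δ)
    set n := N + 3 with hn
    have hfib : (|p 0| / δ) < (Nat.fib (2*n) : ℝ) := by
      have ha1 : 2*n ≤ Nat.fib (2*n) := Nat.le_fib_self (by omega)
      have ha2 : (N:ℝ) ≤ (Nat.fib (2*n):ℝ) := by exact_mod_cast le_trans (by omega) ha1
      linarith
    have habs : |p 0| < (Nat.fib (2*n):ℝ) * δ := by
      rw [div_lt_iff₀ hδpos] at hfib; linarith
    obtain ⟨_, _, _, h2n⟩ := h n (by omega)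
    rw [key n] at h2n
    have hp2 : 0 ≤ Ψ^n := pow_nonneg hΨ0 n
    have hpsi : Ψ^n * p 0 ≤ |p 0| := by
      calc Ψ^n * p 0 ≤ Ψ^n * |p 0| := mul_le_mul_of_nonneg_left (le_abs_self _) hp2
        _ ≤ 1 * |p 0| := mul_le_mul_of_nonneg_right (pow_le_one₀ hΨ0 hΨ1) (abs_nonneg _)
        _ = |p 0| := one_mul _
    nlinarith [h2n, habs, hpsi]
  · rintro ⟨ha, hb, h1, h2⟩ n hn
    refine ⟨ha, hb, mul_nonneg (Nat.cast_nonneg _) h1, ?_⟩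
    have hx : 0 ≤ p 0 := by nlinarith
    rw [key n]
    have h3 : 0 ≤ Ψ^n * p 0 := mul_nonneg (pow_nonneg hΨ0 n) hx
    have h4 : (Nat.fib (2*n):ℝ) * p 1 ≤ (Nat.fib (2*n):ℝ) * (Φ * p 0) :=
      mul_le_mul_of_nonneg_left h2 (Nat.cast_nonneg _)
    nlinarith


end
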